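/- There is no KbiG model N=(U,S,e) on a crisp frame with finite U such that e(∼∼(p → ◇p) ∧ ∼∼(p ⧀ ◇p), s) = 1 for every s ∈ U. (Hence the formula ∼∼(p → ◇p) ∧ ∼∼(p ⧀ ◇p) is globally satisfiable on an infinite crisp model but on no finite one, so the natural filtration constructions fail for KbiG.) -/

import Mathlib

/- Truth values: the real unit interval [0,1] with its complete lattice structure
   (so `sInf ∅ = 1` and `sSup ∅ = 0`). -/
instance : Fact ((0:ℝ) ≤ 1) := ⟨zero_le_one⟩

abbrev TV : Type := unitInterval

/-- Gödel implication: `a →G b = 1` if `a ≤ b`, else `b`. -/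
noncomputable def gimp (a b : TV) : TV := if a ≤ b then 1 else b

/-- Gödel coimplication: `a ⧀G b = 0` if `a ≤ b`, else `a`. -/
noncomputable def gcoimp (a b : TV) : TV := if a ≤ b then 0 else a

/-- ¬-free formulas: the language `biL_{□,◇}` over the countable variable set `ℕ`. -/
inductive FormulaB : Type
  | var : ℕ → FormulaB
  | and : FormulaB → FormulaB → FormulaB
  | or : FormulaB → FormulaB → FormulaB
  | imp : FormulaB → FormulaB → FormulaB
  | coimp : FormulaB → FormulaB → FormulaB
  | box : FormulaB → FormulaB
  | dia : FormulaB → FormulaB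

/-- KbiG valuation on a crisp frame `(W, R)` (`inf ∅ = 1`, `sup ∅ = 0`). -/
noncomputable def bval {W : Type} (R : W → W → Prop) (v : ℕ → W → TV) :
    FormulaB → W → TV
  | .var p, w => v p w
  | .and φ ψ, w => bval R v φ w ⊓ bval R v ψ w
  | .or φ ψ, w => bval R v φ w ⊔ bval R v ψ w
  | .imp φ ψ, w => gimp (bval R v φ w) (bval R v ψ w)
  | .coimp φ ψ, w => gcoimp (bval R v φ w) (bval R v ψ w)
  | .box φ, w => sInf ((fun w' => bval R v φ w') '' {w' | R w w'})
  | .dia φ, w => sSup ((fun w' => bval R v φ w') '' {w' | R w w'})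

/-- `𝟏 := p → p`. -/
def bone : FormulaB := .imp (.var 0) (.var 0)

/-- `𝟎 := p ⧀ p`. -/
def bzero : FormulaB := .coimp (.var 0) (.var 0)

/-- Gödel negation `∼φ := φ → 𝟎`. -/
def bnegG (φ : FormulaB) : FormulaB := .imp φ bzero

/-- Baaz delta `Δτ := ∼(𝟏 ⧀ τ)`. -/
def bDelta (τ : FormulaB) : FormulaB := bnegG (.coimp bone τ)

/-- The formula `𝟏 ⧀ ◇((p ⧀ q) ∧ q)` with `p := var 0`, `q := var 1`. -/
def phiFin : FormulaB := .coimp bone (.dia (.and (.coimp (.var 0) (.var 1)) (.var 1)))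

/-- `φ^≤ := ∼∼(p → ◇p)`. -/
def phiLe : FormulaB := bnegG (bnegG (.imp (.var 0) (.dia (.var 0))))

/-- `φ^> := ∼∼(p ⧀ ◇p)`. -/
def phiGt : FormulaB := bnegG (bnegG (.coimp (.var 0) (.dia (.var 0))))

lemma TV.le_zero_iff {x : TV} : x ≤ 0 ↔ x = 0 :=
  ⟨fun h => le_antisymm h x.2.1, fun h => h.le⟩

lemma TV.zero_ne_one : (0 : TV) ≠ 1 := by
  intro h
  have := congrArg Subtype.val h
  norm_num [unitInterval] at this

lemma bval_bzero {W : Type} (R : W → W → Prop) (v : ℕ → W → TV) (w : W) :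
    bval R v bzero w = 0 := by
  simp [bval, bzero, gcoimp]

lemma bval_bnegG {W : Type} (R : W → W → Prop) (v : ℕ → W → TV) (φ : FormulaB) (w : W) :
    bval R v (bnegG φ) w = if bval R v φ w = 0 then 1 else 0 := by
  simp only [bnegG, bval, bval_bzero, gcoimp, le_refl, if_true, gimp, TV.le_zero_iff]

lemma bval_negneg_eq_one {W : Type} (R : W → W → Prop) (v : ℕ → W → TV) (φ : FormulaB)
    (w : W) (h : bval R v (bnegG (bnegG φ)) w = 1) : bval R v φ w ≠ 0 := by
  intro h0
  rw [bval_bnegG, bval_bnegG, h0] at h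
  rw [if_pos rfl, if_neg (Ne.symm TV.zero_ne_one)] at h
  exact TV.zero_ne_one h

/-- no KbiG model on a crisp frame with finitely many worlds satisfies
`∼∼(p → ◇p) ∧ ∼∼(p ⧀ ◇p)` (to degree 1) at every world. -/
theorem stmt9 :
    ¬ ∃ (U : Type) (_ : Nonempty U) (_ : Finite U) (S : U → U → Prop) (e : ℕ → U → TV),
      ∀ s : U, bval S e (.and phiLe phiGt) s = 1 := by
  rintro ⟨U, ⟨s0⟩, hF, S, e, h⟩
  have key : ∀ s : U, ∃ t, S s t ∧ e 0 t < e 0 s := by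
    intro s
    have hs := h s
    have hle : bval S e phiLe s = 1 := by
      have h1 : bval S e phiLe s ⊓ bval S e phiGt s = 1 := hs
      exact le_antisymm (bval S e phiLe s).2.2 (h1 ▸ inf_le_left)
    have hgt : bval S e phiGt s = 1 := by
      have h1 : bval S e phiLe s ⊓ bval S e phiGt s = 1 := hs
      exact le_antisymm (bval S e phiGt s).2.2 (h1 ▸ inf_le_right)
    have hA := bval_negneg_eq_one S e _ s hle
    have hB := bval_negneg_eq_one S e _ s hgt
    simp only [bval, gimp, gcoimp] at hA hB
    set b : TV := sSup ((fun w' => e 0 w') '' {w' | S s w'}) with hb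
    have hnle : ¬ (e 0 s ≤ b) := by
      intro hle'
      exact hB (if_pos hle')
    have hbne : b ≠ 0 := by
      intro h0; exact hA ((if_neg hnle).trans h0)
    have hbpos : 0 < b := lt_of_le_of_ne (b.2.1 : (0:TV) ≤ b) (Ne.symm hbne)
    have hne : ((fun w' => e 0 w') '' {w' | S s w'}).Nonempty := by
      by_contra hemp
      rw [Set.not_nonempty_iff_eq_empty] at hemp
      rw [hb, hemp, sSup_empty] at hbpos
      exact absurd hbpos (by simp)
    obtain ⟨x, ⟨t, ht, rfl⟩⟩ := hne
    exact ⟨t, ht, lt_of_le_of_lt (le_sSup (Set.mem_image_of_mem _ ht)) (not_le.mp hnle)⟩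
  choose f hf1 hf2 using key
  have dec : ∀ n : ℕ, e 0 (f^[n+1] s0) < e 0 (f^[n] s0) := by
    intro n; rw [Function.iterate_succ_apply']; exact hf2 _
  have mono : StrictAnti (fun n => e 0 (f^[n] s0)) := strictAnti_nat_of_succ_lt dec
  have inj : Function.Injective (fun n : ℕ => f^[n] s0) := fun m n hmn =>
    mono.injective (congrArg (e 0) hmn)
  exact Finite.false (α := ℕ) (Finite.of_injective _ inj)
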